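/- For every nonzero P ∈ O[x], v(P(θ)) ≥ H(P), and equality holds if and only if R_λ(P)(γ̄) ≠ 0 in 𝔽_L. -/

import Mathlib

/-!
Common framework: a finite extension `K` of `ℚ_[p]` inside a fixed algebraic closure
`Om p := AlgebraicClosure ℚ_[p]`, its ring of integers `Oring p K` (the integral closure
of `ℤ_[p]` in `K`), the `ℚ`-valued valuation `w` on `Om p` extending the valuation of `K`
normalized by `w(K^×) = ℤ`, a fixed uniformizer `π`, and the whole Newton polygon /
residual polynomial machinery of Montes–Guàrdia–Nart in order one.
-/

open Polynomial

open scoped Classical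

set_option maxHeartbeats 1000000
set_option synthInstance.maxHeartbeats 1000000

noncomputable section

variable (p : ℕ) [Fact p.Prime]

/-- A fixed algebraic closure of `ℚ_[p]`. -/
abbrev Om : Type _ := AlgebraicClosure ℚ_[p]

/-- The ring of integers (integral closure of `ℤ_[p]`) of a subfield `K` of the
algebraic closure of `ℚ_[p]`. -/
def Oring (K : IntermediateField ℚ_[p] (Om p)) : Subring K :=
  letI : Algebra ℤ_[p] K :=
    ((algebraMap ℚ_[p] K).comp (PadicInt.Coe.ringHom)).toAlgebra
  (integralClosure ℤ_[p] K).toSubring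

/-- Extract the integer value of an element of `WithTop ℚ` (junk value `0`). -/
def zOf (q : WithTop ℚ) : ℤ :=
  if h : ∃ n : ℤ, q = ((n : ℚ) : WithTop ℚ) then h.choose else 0

/-- Extract the rational value (junk value `0` at `⊤`). -/
def qOf (q : WithTop ℚ) : ℚ := q.untopD 0

/-- Canonical map `WithTop ℤ → WithTop ℚ`. -/
def zq : WithTop ℤ → WithTop ℚ := WithTop.map fun n : ℤ => (n : ℚ)

/-- A finite extension `K` of `ℚ_[p]` inside the fixed algebraic closure, together with
the `ℚ ∪ {∞}`-valued additive valuation `w` on the algebraic closure which is the unique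
extension of the discrete valuation `v` of `K` normalized by `v(K^×) = ℤ`, and a fixed
uniformizer `π ∈ O`.  (The hypotheses pin `w` down uniquely: it is an additive valuation,
it is `ℤ`-valued and surjective onto `ℤ` on `K^×`, and it is proportional to the `p`-adic
valuation on `ℚ_[p]`.) -/
structure PadicCtx where
  K : IntermediateField ℚ_[p] (Om p)
  fd : FiniteDimensional ℚ_[p] K
  w : Om p → WithTop ℚ
  w_top : ∀ x, w x = ⊤ ↔ x = 0
  w_mul : ∀ x y, w (x * y) = w x + w y
  w_add : ∀ x y, min (w x) (w y) ≤ w (x + y)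
  w_Kint : ∀ x : K, x ≠ 0 → ∃ n : ℤ, w (x : Om p) = ((n : ℚ) : WithTop ℚ)
  w_Ksurj : ∀ n : ℤ, ∃ x : K, w (x : Om p) = ((n : ℚ) : WithTop ℚ)
  ePad : ℚ
  ePad_pos : 0 < ePad
  w_padic : ∀ x : ℚ_[p], x ≠ 0 →
    w (algebraMap ℚ_[p] (Om p) x) = (((x.valuation : ℚ) * ePad : ℚ) : WithTop ℚ)
  πO : Oring p K
  w_π : w ((πO : K) : Om p) = ((1 : ℚ) : WithTop ℚ)

namespace PadicCtx

variable {p} (C : PadicCtx p)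

/-! ### Basic facts about `w` needed to construct rings of integers -/

theorem w_zero : C.w 0 = ⊤ := (C.w_top 0).mpr rfl

theorem w_one : C.w 1 = 0 := by
  have h := C.w_mul 1 1
  rw [mul_one] at h
  have h1 : C.w 1 ≠ ⊤ := fun hh => one_ne_zero ((C.w_top 1).mp hh)
  rcases WithTop.ne_top_iff_exists.mp h1 with ⟨a, ha⟩
  rw [← ha] at h ⊢
  have : a = a + a := by exact_mod_cast h
  have : a = 0 := by linarith
  exact_mod_cast congrArg (fun x : ℚ => ((x : WithTop ℚ))) this

theorem w_negone : C.w (-1) = 0 := by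
  have h := C.w_mul (-1) (-1)
  rw [neg_mul_neg, one_mul, C.w_one] at h
  have h1 : C.w (-1) ≠ ⊤ := by
    intro hh
    have : (-1 : Om p) = 0 := (C.w_top (-1)).mp hh
    simpa using this
  rcases WithTop.ne_top_iff_exists.mp h1 with ⟨a, ha⟩
  rw [← ha] at h ⊢
  have h' : (0 : ℚ) = a + a := by exact_mod_cast h
  have : a = 0 := by linarith
  exact_mod_cast congrArg (fun x : ℚ => ((x : WithTop ℚ))) this

theorem w_neg (x : Om p) : C.w (-x) = C.w x := by
  have h := C.w_mul (-1) x
  rw [neg_one_mul, C.w_negone, zero_add] at h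
  exact h

/-! ### Rings of integers, maximal ideals, residue fields -/

/-- The ring of integers `O_L = {x ∈ L : w x ≥ 0}` of an intermediate field `L`. -/
def OL (L : IntermediateField ℚ_[p] (Om p)) : Subring (Om p) where
  carrier := {x | x ∈ L ∧ 0 ≤ C.w x}
  zero_mem' := ⟨zero_mem L, by rw [C.w_zero]; exact le_top⟩
  one_mem' := ⟨one_mem L, by rw [C.w_one]⟩
  add_mem' := fun {a b} ha hb =>
    ⟨add_mem ha.1 hb.1, le_trans (le_min ha.2 hb.2) (C.w_add a b)⟩
  mul_mem' := fun {a b} ha hb =>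
    ⟨mul_mem ha.1 hb.1, by rw [C.w_mul]; exact add_nonneg ha.2 hb.2⟩
  neg_mem' := fun {a} ha => ⟨neg_mem ha.1, by rw [C.w_neg]; exact ha.2⟩

theorem mem_OL {L : IntermediateField ℚ_[p] (Om p)} {x : Om p} :
    x ∈ C.OL L ↔ x ∈ L ∧ 0 ≤ C.w x := Iff.rfl

/-- The maximal ideal `m_L = {x ∈ O_L : w x > 0}` of the ring of integers of `L`. -/
def mOL (L : IntermediateField ℚ_[p] (Om p)) : Ideal ↥(C.OL L) where
  carrier := {x | 0 < C.w (x : Om p)}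
  zero_mem' := by
    show 0 < C.w ((0 : ↥(C.OL L)) : Om p)
    rw [show ((0 : ↥(C.OL L)) : Om p) = 0 from rfl, C.w_zero]
    exact lt_top_iff_ne_top.mpr (by simp)
  add_mem' := fun {a b} ha hb =>
    lt_of_lt_of_le (lt_min ha hb) (C.w_add _ _)
  smul_mem' := fun r x hx => by
    show 0 < C.w ((r * x : ↥(C.OL L)) : Om p)
    rw [show ((r * x : ↥(C.OL L)) : Om p) = (r : Om p) * (x : Om p) from rfl, C.w_mul]
    calc (0 : WithTop ℚ) < C.w (x : Om p) := hx
      _ ≤ C.w (r : Om p) + C.w (x : Om p) :=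
        le_add_of_nonneg_left ((C.mem_OL.mp r.2).2)

/-- The residue field `𝔽_L = O_L / m_L`. -/
abbrev resF (L : IntermediateField ℚ_[p] (Om p)) : Type _ := ↥(C.OL L) ⧸ C.mOL L

/-- Inclusion of rings of integers along an inclusion of fields. -/
def OLincl {L M : IntermediateField ℚ_[p] (Om p)} (hLM : L ≤ M) :
    ↥(C.OL L) →+* ↥(C.OL M) where
  toFun x := ⟨x, hLM (C.mem_OL.mp x.2).1, (C.mem_OL.mp x.2).2⟩
  map_one' := rfl
  map_mul' _ _ := rfl
  map_zero' := rfl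
  map_add' _ _ := rfl

/-- The induced map of residue fields. -/
def resMap {L M : IntermediateField ℚ_[p] (Om p)} (hLM : L ≤ M) :
    C.resF L →+* C.resF M :=
  Ideal.Quotient.lift (C.mOL L) ((Ideal.Quotient.mk (C.mOL M)).comp (C.OLincl hLM))
    (fun a ha => by
      simp only [RingHom.comp_apply]
      rw [Ideal.Quotient.eq_zero_iff_mem]
      exact ha)

/-- The residual degree `f(M/L) = [𝔽_M : 𝔽_L]`. -/
def resDeg {L M : IntermediateField ℚ_[p] (Om p)} (hLM : L ≤ M) : ℕ :=
  letI : Algebra (C.resF L) (C.resF M) := (C.resMap hLM).toAlgebra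
  Module.finrank (C.resF L) (C.resF M)

/-- The ramification index `e(M/K)` of `M` over the base field `K`: the least `n > 0`
such that `n • w(M^×) ⊆ ℤ` (recall `w(K^×) = ℤ`). -/
def ramE (M : IntermediateField ℚ_[p] (Om p)) : ℕ :=
  sInf {n | 0 < n ∧ ∀ x : Om p, x ∈ M → x ≠ 0 → ∃ k : ℤ, n • C.w x = ((k : ℚ) : WithTop ℚ)}

/-! ### Polynomials over the ring of integers; `φ`-adic developments -/

/-- Value of `w` on an element of the ring of integers of `K`. -/
def vO (x : ↥(Oring p C.K)) : WithTop ℚ := C.w (((x : C.K)) : Om p)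

/-- The Gauss valuation `v` of a polynomial: the minimum of the values of its
coefficients. -/
def vpol (g : Polynomial ↥(Oring p C.K)) : WithTop ℚ :=
  g.support.inf fun n => C.vO (g.coeff n)

/-- The `i`-th coefficient `a_i` of the `φ`-adic development `f = ∑ a_i φ^i`
(`deg a_i < deg φ`). -/
def phiCoeff (φ f : Polynomial ↥(Oring p C.K)) (i : ℕ) : Polynomial ↥(Oring p C.K) :=
  (f /ₘ (φ ^ i)) %ₘ φ

/-- The residue ring `𝔽 = O/(π)` (the residue field of `K`). -/
abbrev Fres : Type _ := ↥(Oring p C.K) ⧸ (Ideal.span {C.πO} : Ideal ↥(Oring p C.K))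

/-- Reduction of polynomials modulo the maximal ideal `𝔪 = (π)` of `O`. -/
def redO (g : Polynomial ↥(Oring p C.K)) : Polynomial C.Fres :=
  g.map (Ideal.Quotient.mk (Ideal.span {C.πO}))

/-- The residue ring `𝔽_φ = O[x]/(π, φ(x))` (a finite field when `φ` is monic with
irreducible reduction). -/
abbrev Fphi (φ : Polynomial ↥(Oring p C.K)) : Type _ :=
  Polynomial ↥(Oring p C.K) ⧸
    (Ideal.span {Polynomial.C C.πO, φ} : Ideal (Polynomial ↥(Oring p C.K)))

/-- `red : O[x] → 𝔽_φ`, extended to polynomials with coefficients in `K` that have a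
(necessarily unique) preimage in `O[x]` (junk value `0` otherwise). -/
def resK (φ : Polynomial ↥(Oring p C.K)) (g : Polynomial ↥C.K) : C.Fphi φ :=
  if h : ∃ g' : Polynomial ↥(Oring p C.K), g'.map (Oring p C.K).subtype = g then
    Ideal.Quotient.mk _ h.choose
  else 0

/-- `g/π^{v(g)} ∈ K[x]`, the normalized polynomial whose reduction gives residual
coefficients. -/
def liftDiv (g : Polynomial ↥(Oring p C.K)) : Polynomial ↥C.K :=
  (g.map (Oring p C.K).subtype) *
    Polynomial.C (((C.πO : C.K)) ^ (-(zOf (C.vpol g))))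

/-! ### Newton polygons: supporting-line data for the slope `λ = -h/e` -/

/-- The quantity `e·v(a_i) + h·i` attached to the point `(i, v(a_i))` of a family of
coefficients `a`. -/
def ptValF (a : ℕ → Polynomial ↥(Oring p C.K)) (h e i : ℕ) : WithTop ℚ :=
  e • C.vpol (a i) + ((h * i : ℕ) : WithTop ℚ)

/-- `min_i (e·v(a_i) + h·i)`: `e` times the ordinate at the origin of the supporting
line of slope `λ = -h/e` of the principal polygon of the points `(i, v(a_i))`. -/
def wvalF (a : ℕ → Polynomial ↥(Oring p C.K)) (n h e : ℕ) : WithTop ℚ :=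
  (Finset.range (n + 1)).inf fun i => C.ptValF a h e i

/-- Initial abscissa of the `λ`-component (`λ = -h/e`). -/
def sInitF (a : ℕ → Polynomial ↥(Oring p C.K)) (n h e : ℕ) : ℕ :=
  sInf {i | C.ptValF a h e i = C.wvalF a n h e}

/-- Final abscissa of the `λ`-component (`λ = -h/e`). -/
def sFinF (a : ℕ → Polynomial ↥(Oring p C.K)) (n h e : ℕ) : ℕ :=
  sSup {i | C.ptValF a h e i = C.wvalF a n h e}

/-- Residual coefficient `c_i` attached to the slope `λ = -h/e`: it is
`red(a_i/π^{v(a_i)})` if `(i, v(a_i))` lies on the supporting line of slope `λ`, and `0`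
otherwise. -/
def resCoeffF (φ : Polynomial ↥(Oring p C.K)) (a : ℕ → Polynomial ↥(Oring p C.K))
    (n h e i : ℕ) : C.Fphi φ :=
  if C.ptValF a h e i = C.wvalF a n h e then C.resK φ (C.liftDiv (a i)) else 0

/-- The residual polynomial `R_λ(y) = ∑_{j=0}^d c_{s+je} y^j` attached to the slope
`λ = -h/e`. -/
def resPolyF (φ : Polynomial ↥(Oring p C.K)) (a : ℕ → Polynomial ↥(Oring p C.K))
    (n h e : ℕ) : Polynomial (C.Fphi φ) :=
  ∑ j ∈ Finset.range ((C.sFinF a n h e - C.sInitF a n h e) / e + 1),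
    Polynomial.C (C.resCoeffF φ a n h e (C.sInitF a n h e + j * e)) * Polynomial.X ^ j

/-- `(i, v(a_i))` lies on (the finite part of) the principal polygon of the points
`(i, v(a_i))`, i.e. on the supporting line of some negative slope. -/
def onF (a : ℕ → Polynomial ↥(Oring p C.K)) (n i : ℕ) : Prop :=
  ∃ h e : ℕ, 0 < h ∧ 0 < e ∧ C.ptValF a h e i = C.wvalF a n h e

/-- Residual coefficient `c_i` of the principal polygon of the points `(i, v(a_i))`. -/
def cCoeffF (φ : Polynomial ↥(Oring p C.K)) (a : ℕ → Polynomial ↥(Oring p C.K))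
    (n i : ℕ) : C.Fphi φ :=
  if C.onF a n i then C.resK φ (C.liftDiv (a i)) else 0

/-! Specializations to the `φ`-adic development of a polynomial `f`. -/

def ptVal (φ f : Polynomial ↥(Oring p C.K)) (h e i : ℕ) : WithTop ℚ :=
  C.ptValF (C.phiCoeff φ f) h e i

def wval (φ f : Polynomial ↥(Oring p C.K)) (h e : ℕ) : WithTop ℚ :=
  C.wvalF (C.phiCoeff φ f) f.natDegree h e

def sInit (φ f : Polynomial ↥(Oring p C.K)) (h e : ℕ) : ℕ :=
  C.sInitF (C.phiCoeff φ f) f.natDegree h e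

def sFin (φ f : Polynomial ↥(Oring p C.K)) (h e : ℕ) : ℕ :=
  C.sFinF (C.phiCoeff φ f) f.natDegree h e

/-- The residual polynomial `R_λ(f) ∈ 𝔽_φ[y]` of `f` attached to `λ = -h/e`. -/
def resPoly (φ f : Polynomial ↥(Oring p C.K)) (h e : ℕ) : Polynomial (C.Fphi φ) :=
  C.resPolyF φ (C.phiCoeff φ f) f.natDegree h e

/-- Residual coefficient `c_i` of `N_φ⁻(f)`. -/
def cCoeff (φ f : Polynomial ↥(Oring p C.K)) (i : ℕ) : C.Fphi φ :=
  C.cCoeffF φ (C.phiCoeff φ f) f.natDegree i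

/-- `ord_φ(f)`: the length of the side of slope `-∞` of `N_φ⁻(f)`. -/
def ordPhi (φ f : Polynomial ↥(Oring p C.K)) : ℕ := sSup {k | φ ^ k ∣ f}

/-- `ω(f) = ord_{φ̄}(f̄)`: for monic `f`, the length of the principal polygon
`N_φ⁻(f)`. -/
def omga (φ f : Polynomial ↥(Oring p C.K)) : ℕ := sSup {k | (C.redO φ) ^ k ∣ C.redO f}

/-! ### Evaluation in the algebraic closure -/

/-- The canonical map `O → Ω`. -/
def toOm : ↥(Oring p C.K) →+* Om p :=
  (algebraMap ↥C.K (Om p)).comp (Oring p C.K).subtype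

/-- Evaluation of a polynomial with coefficients in `O` at a point of the algebraic
closure. -/
def evOm (g : Polynomial ↥(Oring p C.K)) (θ : Om p) : Om p := (g.map C.toOm).eval θ

/-- The image of the uniformizer in `Ω`. -/
def piOm : Om p := C.toOm C.πO

/-- `γ(θ) = φ(θ)^e/π^h`. -/
def gamOm (φ : Polynomial ↥(Oring p C.K)) (h e : ℕ) (θ : Om p) : Om p :=
  (C.evOm φ θ) ^ (e : ℤ) * C.piOm ^ (-(h : ℤ))

/-- The canonical value in `Ω` of (a lift of) the residual coefficient `c_i` of `P`:
`(a_i/π^{v(a_i)})(θ)` when `(i, v(a_i))` lies on the supporting line, `0` otherwise. -/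
def cOm (φ P : Polynomial ↥(Oring p C.K)) (h e i : ℕ) (θ : Om p) : Om p :=
  if C.ptVal φ P h e i = C.wval φ P h e then
    C.evOm (C.phiCoeff φ P i) θ * C.piOm ^ (-(zOf (C.vpol (C.phiCoeff φ P i))))
  else 0

/-- The canonical value in `Ω` of (the canonical lift of) `R_λ(P)(γ̄)`:
`∑_j c_{s+je}(θ) · γ(θ)^j`.  Its residue class in `𝔽_L` is `R_λ(P)(γ̄)`. -/
def Rom (φ P : Polynomial ↥(Oring p C.K)) (h e : ℕ) (θ : Om p) : Om p :=
  ∑ j ∈ Finset.range ((C.sFin φ P h e - C.sInit φ P h e) / e + 1),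
    C.cOm φ P h e (C.sInit φ P h e + j * e) θ * (C.gamOm φ h e θ) ^ j

/-- `P⁰(θ) = ∑_{(i,u_i) ∈ S_λ(P)} a_i(θ) φ(θ)^i`. -/
def P0om (φ P : Polynomial ↥(Oring p C.K)) (h e : ℕ) (θ : Om p) : Om p :=
  ∑ i ∈ Finset.range (P.natDegree + 1),
    if C.ptVal φ P h e i = C.wval φ P h e then
      C.evOm (C.phiCoeff φ P i) θ * (C.evOm φ θ) ^ i
    else 0

/-- The value `P^S(θ) = π^{-u'} φ(θ)^{-s'} P⁰(θ)` of the virtual factor of `P` attached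
to `λ = -h/e` at `θ`. -/
def PSom (φ P : Polynomial ↥(Oring p C.K)) (h e : ℕ) (θ : Om p) : Om p :=
  C.piOm ^ (-(zOf (C.vpol (C.phiCoeff φ P (C.sInit φ P h e))))) *
    (C.evOm φ θ) ^ (-(C.sInit φ P h e : ℤ)) * C.P0om φ P h e θ

/-- `H(P)`: the ordinate at the origin of the line of slope `λ = -h/e` containing
`S_λ(P)`. -/
def Hq (φ P : Polynomial ↥(Oring p C.K)) (h e : ℕ) : ℚ :=
  qOf (C.wval φ P h e) / e

/-! ### Resultants and indices -/

/-- `v(Res(P, Q)) = ∑_{P(α)=0} v(Q(α))` (sum over the roots of `P` in `Ω` with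
multiplicity). -/
def vRes (P Q : Polynomial ↥(Oring p C.K)) : WithTop ℚ :=
  ((P.map C.toOm).roots.map fun α => C.w (C.evOm Q α)).sum

/-- `u_i = v(a_i)`, ordinate of the `i`-th point of the `φ`-Newton polygon. -/
def uQ (φ f : Polynomial ↥(Oring p C.K)) (i : ℕ) : WithTop ℚ :=
  C.vpol (C.phiCoeff φ f i)

/-- The ordinate of the `φ`-Newton polygon (lower convex envelope of the points
`(i, u_i)`) at the integer abscissa `i`: the minimum over all segments joining two points
`(j, u_j)`, `(k, u_k)` with `j ≤ i ≤ k` of their value at `i`. -/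
def NyW (φ f : Polynomial ↥(Oring p C.K)) (i : ℕ) : WithTop ℚ :=
  ((Finset.range (i + 1)) ×ˢ (Finset.Icc i f.natDegree)).inf fun jk =>
    if jk.1 = jk.2 then C.uQ φ f i
    else
      ((C.uQ φ f jk.1).map fun a => (((jk.2 - i : ℕ) : ℚ) / ((jk.2 - jk.1 : ℕ) : ℚ)) * a) +
      ((C.uQ φ f jk.2).map fun a => (((i - jk.1 : ℕ) : ℚ) / ((jk.2 - jk.1 : ℕ) : ℚ)) * a)

/-- Rational value of the ordinate of the `φ`-Newton polygon at abscissa `i`. -/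
def NyQ (φ f : Polynomial ↥(Oring p C.K)) (i : ℕ) : ℚ := qOf (C.NyW φ f i)

/-- `ind(N_φ⁻(f))`: the index of the principal `φ`-polygon of `f`; the side of slope
`-∞` (of length `ord_φ(f)`) contributes its length times the total height of the finite
part, and the finite part contributes the number of lattice points below (or on) the
polygon, strictly above the horizontal line through its last point and strictly beyond
the vertical line through the initial point of the finite part. -/
def indNP (φ f : Polynomial ↥(Oring p C.K)) : ℚ :=
  (C.ordPhi φ f) * (C.NyQ φ f (C.ordPhi φ f) - C.NyQ φ f (C.omga φ f)) +
  ∑ i ∈ Finset.Ioo (C.ordPhi φ f) (C.omga φ f),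
    ((⌊C.NyQ φ f i - C.NyQ φ f (C.omga φ f)⌋ : ℤ) : ℚ)

/-- Length `E` of the `λ`-component of `N_φ⁻(P)` for `λ = -μ`, `μ ∈ ℚ_{>0}`. -/
def Elen (φ P : Polynomial ↥(Oring p C.K)) (μ : ℚ) : ℕ :=
  C.sFin φ P μ.num.toNat μ.den - C.sInit φ P μ.num.toNat μ.den

/-- Height `H` of the `λ`-component of `N_φ⁻(P)` for `λ = -μ`. -/
def Hht (φ P : Polynomial ↥(Oring p C.K)) (μ : ℚ) : ℚ := (C.Elen φ P μ : ℚ) * μ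

/-- Total height of the finite part of `N_φ⁻(P)`. -/
def Htot (φ P : Polynomial ↥(Oring p C.K)) : ℚ :=
  ∑ᶠ μ : ℚ, if 0 < μ then C.Hht φ P μ else 0

/-- `∑_{i,j} min{E_i H'_j, E'_j H_i}` over the sides of `N_φ⁻(P)` and `N_φ⁻(Q)`,
where a side of slope `-∞` (of length `ord_φ`) has infinite height, so that it
contributes its length times the total height of the finite part of the other
polygon. -/
def resP (φ P Q : Polynomial ↥(Oring p C.K)) : ℚ :=
  (C.ordPhi φ P) * C.Htot φ Q + (C.ordPhi φ Q) * C.Htot φ P +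
  ∑ᶠ μ : ℚ, ∑ᶠ μ' : ℚ,
    if 0 < μ ∧ 0 < μ' then
      min ((C.Elen φ P μ : ℚ) * C.Hht φ Q μ') ((C.Elen φ Q μ' : ℚ) * C.Hht φ P μ)
    else 0

/-- `ord_ψ(R_λ(P))`: the multiplicity of the monic irreducible `ψ ∈ 𝔽_φ[y]` in the
residual polynomial of `P` attached to `λ = -h/e`. -/
def omPsi (φ : Polynomial ↥(Oring p C.K)) (ψ : Polynomial (C.Fphi φ))
    (P : Polynomial ↥(Oring p C.K)) (h e : ℕ) : ℕ :=
  sSup {k | ψ ^ k ∣ C.resPoly φ P h e}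

/-- The subring `O[θ]` of `Ω` generated by the ring of integers of `K` and `θ`. -/
def Otheta (θ : Om p) : Subring (Om p) :=
  Subring.closure ((C.OL C.K : Set (Om p)) ∪ {θ})

/-- The quotient `O_L / O[θ]` (as additive groups); its cardinality is
`q^{ind(F)}` for the minimal polynomial `F` of `θ` over `K`. -/
def idxQuot (L : IntermediateField ℚ_[p] (Om p)) (θ : Om p) : Type _ :=
  ↥(C.OL L) ⧸
    (AddSubgroup.comap ((C.OL L).subtype.toAddMonoidHom) (C.Otheta θ).toAddSubgroup)

end PadicCtx

section AuxLemmas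

open Polynomial

variable {p : ℕ} [Fact p.Prime] (C : PadicCtx p)

lemma aux_w_ne_top {x : Om p} (hx : x ≠ 0) : C.w x ≠ ⊤ :=
  fun hh => hx ((C.w_top x).mp hh)

lemma aux_w_coe {x : Om p} (hx : x ≠ 0) : ∃ r : ℚ, C.w x = (r : WithTop ℚ) := by
  rcases WithTop.ne_top_iff_exists.mp (aux_w_ne_top C hx) with ⟨r, hr⟩
  exact ⟨r, hr.symm⟩

lemma aux_w_pow {x : Om p} {r : ℚ} (hx : C.w x = (r : WithTop ℚ)) (n : ℕ) :
    C.w (x ^ n) = (((n : ℚ) * r : ℚ) : WithTop ℚ) := by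
  induction n with
  | zero => simpa using C.w_one
  | succ n ih =>
      rw [pow_succ, C.w_mul, ih, hx, ← WithTop.coe_add, WithTop.coe_eq_coe]
      push_cast; ring

lemma aux_w_pow_nonneg {x : Om p} (hx : 0 ≤ C.w x) (n : ℕ) : 0 ≤ C.w (x ^ n) := by
  induction n with
  | zero => simp [C.w_one]
  | succ n ih => rw [pow_succ, C.w_mul]; exact add_nonneg ih hx

lemma aux_w_inv {x : Om p} (hx0 : x ≠ 0) {r : ℚ} (hx : C.w x = (r : WithTop ℚ)) :
    C.w x⁻¹ = ((-r : ℚ) : WithTop ℚ) := by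
  have h1 : C.w (x * x⁻¹) = 0 := by rw [mul_inv_cancel₀ hx0, C.w_one]
  rw [C.w_mul, hx] at h1
  rcases aux_w_coe C (inv_ne_zero hx0) with ⟨s, hs⟩
  rw [hs] at h1 ⊢
  rw [← WithTop.coe_add] at h1
  have h2 : r + s = 0 := by exact_mod_cast h1
  rw [WithTop.coe_eq_coe]; linarith

lemma aux_w_zpow {x : Om p} (hx0 : x ≠ 0) {r : ℚ} (hx : C.w x = (r : WithTop ℚ)) (k : ℤ) :
    C.w (x ^ k) = (((k : ℚ) * r : ℚ) : WithTop ℚ) := by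
  rcases k with n | n
  · rw [Int.ofNat_eq_coe, zpow_natCast, aux_w_pow C hx n, WithTop.coe_eq_coe]
    push_cast; ring
  · rw [zpow_negSucc, aux_w_inv C (pow_ne_zero _ hx0) (aux_w_pow C hx (n + 1)),
      WithTop.coe_eq_coe, Int.cast_negSucc]
    push_cast; ring

lemma aux_w_sum_le {ι : Type*} (s : Finset ι) (f : ι → Om p) (c : WithTop ℚ)
    (hc : ∀ i ∈ s, c ≤ C.w (f i)) : c ≤ C.w (∑ i ∈ s, f i) := by
  induction s using Finset.cons_induction with
  | empty => rw [Finset.sum_empty, C.w_zero]; exact le_top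
  | cons a s ha ih =>
      rw [Finset.sum_cons]
      refine le_trans (le_min (hc a (Finset.mem_cons_self a s))
        (ih fun i hi => hc i (Finset.mem_cons.mpr (Or.inr hi)))) (C.w_add _ _)

lemma aux_w_sum_lt {ι : Type*} (s : Finset ι) (f : ι → Om p) (c : ℚ)
    (hc : ∀ i ∈ s, (c : WithTop ℚ) < C.w (f i)) :
    (c : WithTop ℚ) < C.w (∑ i ∈ s, f i) := by
  induction s using Finset.cons_induction with
  | empty => rw [Finset.sum_empty, C.w_zero]; exact WithTop.coe_lt_top c
  | cons a s ha ih =>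
      rw [Finset.sum_cons]
      refine lt_of_lt_of_le (lt_min (hc a (Finset.mem_cons_self a s))
        (ih fun i hi => hc i (Finset.mem_cons.mpr (Or.inr hi)))) (C.w_add _ _)

lemma aux_w_add_eq_right (x y : Om p) (hlt : C.w y < C.w x) : C.w (x + y) = C.w y := by
  have h1 : C.w y ≤ C.w (x + y) := by
    have h := C.w_add x y
    rwa [min_eq_right hlt.le] at h
  have h2 : C.w ((x + y) + (-x)) = C.w y := by
    rw [show (x + y) + (-x) = y by ring]
  have h3 := C.w_add (x + y) (-x)
  rw [C.w_neg, h2] at h3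
  rcases min_le_iff.mp h3 with hcase | hcase
  · exact le_antisymm hcase h1
  · exact absurd hcase (not_le.mpr hlt)

lemma aux_lt_add_of_pos (a : ℚ) (t : WithTop ℚ) (ht : 0 < t) :
    (a : WithTop ℚ) < (a : WithTop ℚ) + t := by
  induction t using WithTop.recTopCoe with
  | top => rw [add_top]; exact WithTop.coe_lt_top a
  | coe t =>
      rw [← WithTop.coe_add, WithTop.coe_lt_coe]
      have : (0 : ℚ) < t := by exact_mod_cast ht
      linarith

lemma aux_nsmul_coe (n : ℕ) (a : ℚ) :
    n • ((a : WithTop ℚ)) = (((n : ℚ) * a : ℚ) : WithTop ℚ) := by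
  induction n with
  | zero => simp
  | succ n ih =>
      rw [succ_nsmul, ih, ← WithTop.coe_add, WithTop.coe_eq_coe]
      push_cast; ring

lemma aux_nsmul_top {n : ℕ} (hn : n ≠ 0) : n • (⊤ : WithTop ℚ) = ⊤ := by
  cases n with
  | zero => exact absurd rfl hn
  | succ n => rw [succ_nsmul]; exact add_top _

lemma aux_w_root_nonneg {z : Om p} {Q : Polynomial (Om p)} (hQ : Q.Monic)
    (h0 : Q.eval z = 0) (hc : ∀ i, 0 ≤ C.w (Q.coeff i)) : 0 ≤ C.w z := by
  by_cases hz : z = 0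
  · rw [hz, C.w_zero]; exact le_top
  by_contra hneg
  push_neg at hneg
  rcases aux_w_coe C hz with ⟨r, hr⟩
  have hr0 : r < 0 := by
    rw [hr] at hneg
    exact_mod_cast hneg
  set n := Q.natDegree with hn
  have hn0 : n ≠ 0 := by
    intro hh
    have hQ1 : Q = 1 := hQ.natDegree_eq_zero.mp hh
    rw [hQ1] at h0; simp at h0
  have hev : ∑ i ∈ Finset.range (n + 1), Q.coeff i * z ^ i = 0 := by
    rw [← Polynomial.eval_eq_sum_range]; exact h0
  have hzn : z ^ n = -∑ i ∈ Finset.range n, Q.coeff i * z ^ i := by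
    rw [Finset.sum_range_succ, Polynomial.Monic.coeff_natDegree hQ, one_mul] at hev
    exact eq_neg_of_add_eq_zero_right hev
  have hlow : ((((n : ℚ) - 1) * r : ℚ) : WithTop ℚ) ≤ C.w (z ^ n) := by
    rw [hzn, C.w_neg]
    apply aux_w_sum_le
    intro i hi
    by_cases hci : Q.coeff i = 0
    · rw [hci, zero_mul, C.w_zero]; exact le_top
    · rw [C.w_mul, aux_w_pow C hr i]
      have h1 : (((n : ℚ) - 1) * r : ℚ) ≤ ((i : ℚ) * r : ℚ) := by
        have hi' : (i : ℚ) ≤ (n : ℚ) - 1 := by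
          have : i + 1 ≤ n := Finset.mem_range.mp hi
          have : (i : ℚ) + 1 ≤ (n : ℚ) := by exact_mod_cast this
          linarith
        nlinarith
      calc ((((n : ℚ) - 1) * r : ℚ) : WithTop ℚ) ≤ (((i : ℚ) * r : ℚ) : WithTop ℚ) := by
            exact_mod_cast h1
        _ ≤ C.w (Q.coeff i) + (((i : ℚ) * r : ℚ) : WithTop ℚ) :=
            le_add_of_nonneg_left (hc i)
  rw [aux_w_pow C hr n] at hlow
  have hle : ((n : ℚ) - 1) * r ≤ (n : ℚ) * r := by exact_mod_cast hlow
  have hn1 : (1 : ℚ) ≤ (n : ℚ) := by exact_mod_cast Nat.one_le_iff_ne_zero.mpr hn0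
  nlinarith

end AuxLemmas

section AuxLemmas2

open Polynomial

variable {p : ℕ} [Fact p.Prime] (C : PadicCtx p)

lemma aux_w_toOm_nonneg (x : ↥(Oring p C.K)) : 0 ≤ C.w (C.toOm x) := by
  letI : Algebra ℤ_[p] ↥C.K :=
    ((algebraMap ℚ_[p] ↥C.K).comp (PadicInt.Coe.ringHom)).toAlgebra
  have hx : IsIntegral ℤ_[p] (x : ↥C.K) := x.2
  obtain ⟨Q, hQm, hQ0⟩ := hx
  set ι : ↥C.K →+* Om p := algebraMap ↥C.K (Om p) with hι
  set g : ℤ_[p] →+* Om p := ι.comp (algebraMap ℤ_[p] ↥C.K) with hg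
  have h0 : Polynomial.eval₂ g (ι (x : ↥C.K)) Q = 0 := by
    have := congrArg ι hQ0
    rwa [Polynomial.hom_eval₂, map_zero] at this
  have h0' : (Q.map g).eval (ι (x : ↥C.K)) = 0 := by
    rwa [Polynomial.eval_map]
  have hcoef : ∀ i, 0 ≤ C.w ((Q.map g).coeff i) := by
    intro i
    rw [Polynomial.coeff_map]
    set c := Q.coeff i
    have hgc : g c = algebraMap ℚ_[p] (Om p) (c : ℚ_[p]) := by
      rw [hg, RingHom.comp_apply]
      rw [show (algebraMap ℤ_[p] ↥C.K) c = algebraMap ℚ_[p] ↥C.K (c : ℚ_[p]) from rfl]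
      rw [hι, ← IsScalarTower.algebraMap_apply]
    by_cases hc0 : (c : ℚ_[p]) = 0
    · rw [hgc, hc0, map_zero, C.w_zero]; exact le_top
    · rw [hgc, C.w_padic _ hc0]
      have h1 : (0 : ℚ) ≤ ((c : ℚ_[p]).valuation : ℚ) * C.ePad := by
        have := PadicInt.valuation_coe_nonneg (x := c)
        have h2 : (0 : ℚ) ≤ ((c : ℚ_[p]).valuation : ℚ) := by exact_mod_cast this
        exact mul_nonneg h2 C.ePad_pos.le
      exact_mod_cast h1
  exact aux_w_root_nonneg C (hQm.map g) h0' hcoef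

lemma aux_vO_eq (x : ↥(Oring p C.K)) : C.vO x = C.w (C.toOm x) := rfl

lemma aux_vO_int (x : ↥(Oring p C.K)) (hx : x ≠ 0) :
    ∃ z : ℤ, 0 ≤ z ∧ C.vO x = ((z : ℚ) : WithTop ℚ) := by
  have hx' : (x : ↥C.K) ≠ 0 := fun hh => hx (Subtype.ext hh)
  obtain ⟨z, hz⟩ := C.w_Kint (x : ↥C.K) hx'
  refine ⟨z, ?_, hz⟩
  have h0 : (0 : WithTop ℚ) ≤ ((z : ℚ) : WithTop ℚ) := by
    rw [← hz]; exact aux_w_toOm_nonneg C x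
  have : (0 : ℚ) ≤ (z : ℚ) := by exact_mod_cast h0
  exact_mod_cast this

lemma aux_zOf_coe (z : ℤ) : zOf (((z : ℚ) : WithTop ℚ)) = z := by
  have hex : ∃ n : ℤ, (((z : ℚ) : WithTop ℚ)) = ((n : ℚ) : WithTop ℚ) := ⟨z, rfl⟩
  rw [zOf, dif_pos hex]
  have hspec := hex.choose_spec
  have : ((hex.choose : ℚ) : WithTop ℚ) = ((z : ℚ) : WithTop ℚ) := hspec.symm
  have h2 : (hex.choose : ℚ) = (z : ℚ) := by exact_mod_cast this
  exact_mod_cast h2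

lemma aux_qOf_coe (a : ℚ) : qOf ((a : WithTop ℚ)) = a := rfl

lemma aux_vpol_zero : C.vpol 0 = ⊤ := by
  simp [PadicCtx.vpol]

lemma aux_vpol_spec {g : Polynomial ↥(Oring p C.K)} (hg : g ≠ 0) :
    ∃ z : ℤ, 0 ≤ z ∧ C.vpol g = ((z : ℚ) : WithTop ℚ) := by
  obtain ⟨k, hk, hkeq⟩ := Finset.exists_mem_eq_inf g.support
    (Polynomial.nonempty_support_iff.mpr hg) (fun n => C.vO (g.coeff n))
  obtain ⟨z, hz0, hz⟩ := aux_vO_int C (g.coeff k) (Polynomial.mem_support_iff.mp hk)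
  exact ⟨z, hz0, by rw [PadicCtx.vpol, hkeq, hz]⟩

lemma aux_vpol_le {g : Polynomial ↥(Oring p C.K)} {k : ℕ} (hk : g.coeff k ≠ 0) :
    C.vpol g ≤ C.vO (g.coeff k) :=
  Finset.inf_le (Polynomial.mem_support_iff.mpr hk)

lemma aux_w_evOm_ge (g : Polynomial ↥(Oring p C.K)) {θ : Om p} (hθ : 0 ≤ C.w θ) :
    C.vpol g ≤ C.w (C.evOm g θ) := by
  rw [PadicCtx.evOm, Polynomial.eval_eq_sum_range]
  apply aux_w_sum_le
  intro i hi
  by_cases hc : g.coeff i = 0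
  · rw [Polynomial.coeff_map, hc, map_zero, zero_mul, C.w_zero]; exact le_top
  · rw [Polynomial.coeff_map, C.w_mul]
    calc C.vpol g ≤ C.vO (g.coeff i) := aux_vpol_le C hc
      _ = C.w (C.toOm (g.coeff i)) := aux_vO_eq C _
      _ ≤ _ := le_add_of_nonneg_right (aux_w_pow_nonneg C hθ i)

lemma aux_evOm_hom (θ : Om p) (g : Polynomial ↥(Oring p C.K)) :
    C.evOm g θ = ((Polynomial.evalRingHom θ).comp (Polynomial.mapRingHom C.toOm)) g := rfl

lemma aux_evOm_mul (a b : Polynomial ↥(Oring p C.K)) (θ : Om p) :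
    C.evOm (a * b) θ = C.evOm a θ * C.evOm b θ := by
  rw [aux_evOm_hom, aux_evOm_hom, aux_evOm_hom, map_mul]

lemma aux_evOm_one (θ : Om p) : C.evOm 1 θ = 1 := by
  rw [aux_evOm_hom, map_one]

lemma aux_evOm_zero (θ : Om p) : C.evOm 0 θ = 0 := by
  rw [aux_evOm_hom, map_zero]

end AuxLemmas2

section AuxLemmas3

open Polynomial

variable {p : ℕ} [Fact p.Prime] (C : PadicCtx p)

lemma aux_divdiv {R : Type*} [CommRing R] [Nontrivial R] (f a b : Polynomial R)
    (ha : a.Monic) (hb : b.Monic) : (f /ₘ a) /ₘ b = f /ₘ (a * b) := by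
  symm
  refine (Polynomial.div_modByMonic_unique ((f /ₘ a) /ₘ b)
    (a * ((f /ₘ a) %ₘ b) + f %ₘ a) (ha.mul hb) ⟨?_, ?_⟩).1
  · have h1 := Polynomial.modByMonic_add_div f a
    have h2 := Polynomial.modByMonic_add_div (f /ₘ a) b
    calc a * ((f /ₘ a) %ₘ b) + f %ₘ a + a * b * ((f /ₘ a) /ₘ b)
        = f %ₘ a + a * ((f /ₘ a) %ₘ b + b * ((f /ₘ a) /ₘ b)) := by ring
      _ = f := by rw [h2, h1]
  · apply lt_of_le_of_lt (Polynomial.degree_add_le _ _)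
    rw [max_lt_iff]
    have hb0 : (0 : WithBot ℕ) ≤ b.degree := Polynomial.zero_le_degree_iff.mpr hb.ne_zero
    have habot : a.degree ≠ ⊥ := by
      rw [Ne, Polynomial.degree_eq_bot]; exact ha.ne_zero
    have hab : (a * b).degree = a.degree + b.degree := hb.degree_mul
    constructor
    · rw [hab]
      have hmod : ((f /ₘ a) %ₘ b).degree < b.degree := Polynomial.degree_modByMonic_lt _ hb
      have h3 : (a * ((f /ₘ a) %ₘ b)).degree = ((f /ₘ a) %ₘ b).degree + a.degree := by
        rw [mul_comm]; exact ha.degree_mul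
      rw [h3, add_comm ((f /ₘ a) %ₘ b).degree a.degree]
      exact WithBot.add_lt_add_left habot hmod
    · rw [hab]
      calc (f %ₘ a).degree < a.degree := Polynomial.degree_modByMonic_lt _ ha
        _ ≤ a.degree + b.degree := le_add_of_nonneg_right hb0

lemma aux_dev (φ f : Polynomial ↥(Oring p C.K)) (hφ : φ.Monic) (N : ℕ) :
    f = (∑ i ∈ Finset.range N, C.phiCoeff φ f i * φ ^ i) + (f /ₘ φ ^ N) * φ ^ N := by
  induction N with
  | zero => simp [Polynomial.divByMonic_one]
  | succ N ih =>
      rw [Finset.sum_range_succ]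
      have key : f /ₘ φ ^ N = C.phiCoeff φ f N + (f /ₘ φ ^ (N + 1)) * φ := by
        have h2 := Polynomial.modByMonic_add_div (f /ₘ φ ^ N) φ
        rw [PadicCtx.phiCoeff, pow_succ, ← aux_divdiv f (φ ^ N) φ (hφ.pow N) hφ,
          mul_comm (f /ₘ φ ^ N /ₘ φ) φ]
        exact h2.symm
      calc f = (∑ i ∈ Finset.range N, C.phiCoeff φ f i * φ ^ i) + (f /ₘ φ ^ N) * φ ^ N := ih
        _ = _ := by rw [key]; ring

lemma aux_div_pow_zero (φ f : Polynomial ↥(Oring p C.K)) (hφ : φ.Monic)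
    (hdeg : 1 ≤ φ.natDegree) {N : ℕ} (hN : f.natDegree < N) : f /ₘ φ ^ N = 0 := by
  rw [Polynomial.divByMonic_eq_zero_iff (hφ.pow N)]
  apply lt_of_le_of_lt (Polynomial.degree_le_natDegree)
  have h1 : (φ ^ N).degree = ((N * φ.natDegree : ℕ) : WithBot ℕ) := by
    rw [Polynomial.degree_eq_natDegree (hφ.pow N).ne_zero, hφ.natDegree_pow]
  rw [h1]
  have h2 : f.natDegree < N * φ.natDegree :=
    lt_of_lt_of_le hN (Nat.le_mul_of_pos_right N (by omega))
  exact_mod_cast h2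

lemma aux_dev_full (φ f : Polynomial ↥(Oring p C.K)) (hφ : φ.Monic)
    (hdeg : 1 ≤ φ.natDegree) :
    f = ∑ i ∈ Finset.range (f.natDegree + 1), C.phiCoeff φ f i * φ ^ i := by
  have h := aux_dev C φ f hφ (f.natDegree + 1)
  rwa [aux_div_pow_zero C φ f hφ hdeg (Nat.lt_succ_self _), zero_mul, add_zero] at h

lemma aux_phiCoeff_zero (φ : Polynomial ↥(Oring p C.K)) (hφ : φ.Monic)
    (hdeg : 1 ≤ φ.natDegree) {f : Polynomial ↥(Oring p C.K)} {i : ℕ}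
    (hi : f.natDegree < i) : C.phiCoeff φ f i = 0 := by
  rw [PadicCtx.phiCoeff, aux_div_pow_zero C φ f hφ hdeg hi, Polynomial.zero_modByMonic]

lemma aux_exists_irred (θ' : Om p) :
    ∀ N (g : Polynomial ↥(Oring p C.K)), g.natDegree ≤ N → g.Monic → C.evOm g θ' = 0 →
    ∃ F, F.Monic ∧ Irreducible F ∧ F ∣ g ∧ C.evOm F θ' = 0 := by
  intro N
  induction N with
  | zero =>
      intro g hdeg hm h0
      exfalso
      have hg1 : g = 1 := hm.natDegree_eq_zero.mp (Nat.le_zero.mp hdeg)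
      rw [hg1, aux_evOm_one] at h0
      exact one_ne_zero h0
  | succ N ih =>
      intro g hdeg hm h0
      by_cases hirr : Irreducible g
      · exact ⟨g, hm, hirr, dvd_refl g, h0⟩
      have hgu : ¬IsUnit g := by
        intro hu
        have hg1 : g = 1 := hm.eq_one_of_isUnit hu
        rw [hg1, aux_evOm_one] at h0
        exact one_ne_zero h0
      rw [irreducible_iff] at hirr
      push_neg at hirr
      obtain ⟨a, b, hab, hna, hnb⟩ := hirr hgu
      have ha0 : a ≠ 0 := by rintro rfl; rw [zero_mul] at hab; exact hm.ne_zero hab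
      have hb0 : b ≠ 0 := by rintro rfl; rw [mul_zero] at hab; exact hm.ne_zero hab
      have hlc : a.leadingCoeff * b.leadingCoeff = 1 := by
        rw [← Polynomial.leadingCoeff_mul, ← hab]; exact hm
      have hua : IsUnit a.leadingCoeff := IsUnit.of_mul_eq_one _ hlc
      have hub : IsUnit b.leadingCoeff :=
        IsUnit.of_mul_eq_one _ (by rw [mul_comm]; exact hlc)
      have hdeg_add : a.natDegree + b.natDegree = g.natDegree := by
        rw [hab, Polynomial.natDegree_mul ha0 hb0]
      have hda : a.natDegree ≠ 0 := by
        intro hh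
        apply hna
        rw [Polynomial.eq_C_of_natDegree_eq_zero hh]
        apply Polynomial.isUnit_C.mpr
        have := hua
        rwa [Polynomial.leadingCoeff, hh] at this
      have hdb : b.natDegree ≠ 0 := by
        intro hh
        apply hnb
        rw [Polynomial.eq_C_of_natDegree_eq_zero hh]
        apply Polynomial.isUnit_C.mpr
        have := hub
        rwa [Polynomial.leadingCoeff, hh] at this
      set a' := Polynomial.C b.leadingCoeff * a with ha'
      set b' := Polynomial.C a.leadingCoeff * b with hb'
      have hab' : g = a' * b' := by
        rw [hab, ha', hb']
        calc a * b = Polynomial.C (a.leadingCoeff * b.leadingCoeff) * (a * b) := by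
              rw [hlc, map_one, one_mul]
          _ = _ := by rw [Polynomial.C_mul]; ring
      have hma' : a'.Monic := by
        show a'.leadingCoeff = 1
        rw [ha', Polynomial.leadingCoeff_mul, Polynomial.leadingCoeff_C, mul_comm]
        exact hlc
      have hmb' : b'.Monic := by
        show b'.leadingCoeff = 1
        rw [hb', Polynomial.leadingCoeff_mul, Polynomial.leadingCoeff_C]
        exact hlc
      have hlcb0 : b.leadingCoeff ≠ 0 := hub.ne_zero
      have hlca0 : a.leadingCoeff ≠ 0 := hua.ne_zero
      have hdega' : a'.natDegree = a.natDegree := by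
        rw [ha', Polynomial.natDegree_C_mul hlcb0]
      have hdegb' : b'.natDegree = b.natDegree := by
        rw [hb', Polynomial.natDegree_C_mul hlca0]
      have hprod : C.evOm a' θ' * C.evOm b' θ' = 0 := by
        rw [← aux_evOm_mul, ← hab']; exact h0
      rcases mul_eq_zero.mp hprod with hz | hz
      · obtain ⟨F, h1, h2, h3, h4⟩ := ih a' (by omega) hma' hz
        exact ⟨F, h1, h2, dvd_trans h3 ⟨b', hab'⟩, h4⟩
      · obtain ⟨F, h1, h2, h3, h4⟩ := ih b' (by omega) hmb' hz
        exact ⟨F, h1, h2, dvd_trans h3 ⟨a', by rw [hab', mul_comm]⟩, h4⟩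

end AuxLemmas3

/-- For every nonzero `P ∈ O[x]`, `v(P(θ)) ≥ H(P)`, and equality holds if and only if
`R_λ(P)(γ̄) ≠ 0` in `𝔽_L` (equivalently, the canonical lift
`∑_j c_{s+je}(θ)·γ(θ)^j ∈ O_L` of `R_λ(P)(γ̄)` has value `0`). -/
theorem value_vs_polygon
    (C : PadicCtx p)
    (φ : Polynomial ↥(Oring p C.K)) (hφm : φ.Monic) (hφirr : Irreducible (C.redO φ))
    (f : Polynomial ↥(Oring p C.K)) (hfm : f.Monic) (hdvd : C.redO φ ∣ C.redO f)
    (h e : ℕ) (hh : 0 < h) (he : 0 < e) (hcop : Nat.Coprime h e)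
    (hside : C.sInit φ f h e < C.sFin φ f h e)
    -- the factor `f_{φ,λ}` of `f` attached to `(φ, λ)` by the Theorem of the polygon:
    (flam Gc : Polynomial ↥(Oring p C.K)) (hflamm : flam.Monic) (hGcm : Gc.Monic)
    (hsplit : f = flam * Gc)
    (hflam : ∀ F : Polynomial ↥(Oring p C.K), F.Monic → Irreducible F → F ∣ flam →
      (∃ k : ℕ, 1 ≤ k ∧ C.redO F = (C.redO φ) ^ k) ∧
      (∀ θ' : Om p, C.evOm F θ' = 0 → C.w (C.evOm φ θ') = ((h / e : ℚ) : WithTop ℚ)))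
    (hGc : ∀ F : Polynomial ↥(Oring p C.K), F.Monic → Irreducible F → F ∣ Gc →
      ¬ ((∃ k : ℕ, 1 ≤ k ∧ C.redO F = (C.redO φ) ^ k) ∧
        (∀ θ' : Om p, C.evOm F θ' = 0 → C.w (C.evOm φ θ') = ((h / e : ℚ) : WithTop ℚ))))
    -- a fixed root `θ` of `f_{φ,λ}`:
    (θ : Om p) (hθ : C.evOm flam θ = 0)
    :
    ∀ P : Polynomial ↥(Oring p C.K), P ≠ 0 →
      ((C.Hq φ P h e : ℚ) : WithTop ℚ) ≤ C.w (C.evOm P θ) ∧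
      (C.w (C.evOm P θ) = ((C.Hq φ P h e : ℚ) : WithTop ℚ) ↔
        C.w (C.Rom φ P h e θ) = 0) := by
  -- ### Setup: facts independent of P
  have hdegφ : 1 ≤ φ.natDegree := by
    by_contra hc
    push_neg at hc
    have h0 : φ.natDegree = 0 := by omega
    have hφ1 : φ = 1 := hφm.natDegree_eq_zero.mp h0
    rw [hφ1] at hφirr
    exact hφirr.not_isUnit (by rw [PadicCtx.redO, Polynomial.map_one]; exact isUnit_one)
  have hθ0 : 0 ≤ C.w θ := by
    refine aux_w_root_nonneg C (hflamm.map C.toOm) hθ ?_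
    intro i
    rw [Polynomial.coeff_map]
    exact aux_w_toOm_nonneg C _
  have hwφ : C.w (C.evOm φ θ) = (((h : ℚ) / (e : ℚ) : ℚ) : WithTop ℚ) := by
    obtain ⟨F, hFm, hFirr, hFdvd, hF0⟩ :=
      aux_exists_irred C θ flam.natDegree flam le_rfl hflamm hθ
    exact (hflam F hFm hFirr hFdvd).2 θ hF0
  have hX0 : C.evOm φ θ ≠ 0 := by
    intro h0
    rw [h0, C.w_zero] at hwφ
    exact (WithTop.top_ne_coe) hwφ
  have hwπ : C.w C.piOm = ((1 : ℚ) : WithTop ℚ) := C.w_π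
  have hπ0 : C.piOm ≠ 0 := by
    intro h0
    rw [PadicCtx.piOm] at h0
    rw [PadicCtx.piOm, h0, C.w_zero] at hwπ
    exact (WithTop.top_ne_coe) hwπ
  have he' : ((e : ℚ)) ≠ 0 := by exact_mod_cast he.ne'
  have he0 : (0 : ℚ) < (e : ℚ) := by exact_mod_cast he
  -- ### Per-polynomial part
  intro P hP
  set X : Om p := C.evOm φ θ with hXdef
  set Pi : Om p := C.piOm with hPidef
  set n := P.natDegree with hn
  set A : ℕ → Polynomial ↥(Oring p C.K) := fun i => C.phiCoeff φ P i with hA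
  set u : ℕ → ℤ := fun i => zOf (C.vpol (A i)) with hu
  set T : ℕ → Om p := fun i => C.evOm (A i) θ * X ^ i with hT
  set W : WithTop ℚ := C.wval φ P h e with hW
  set s : ℕ := C.sInit φ P h e with hs
  set S' : ℕ := C.sFin φ P h e with hS'
  -- the φ-adic development of P, evaluated at θ
  have hdev : P = ∑ i ∈ Finset.range (n + 1), A i * φ ^ i := by
    simpa only [hA] using aux_dev_full C φ P hφm hdegφ
  have hPθ : C.evOm P θ = ∑ i ∈ Finset.range (n + 1), T i := by
    conv_lhs => rw [hdev]
    rw [aux_evOm_hom]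
    rw [map_sum]
    refine Finset.sum_congr rfl fun i _ => ?_
    rw [map_mul, map_pow]
    rfl
  -- basic facts about the coefficients
  have huval : ∀ i, A i ≠ 0 → C.vpol (A i) = ((u i : ℚ) : WithTop ℚ) ∧ 0 ≤ u i := by
    intro i hi
    obtain ⟨z, hz0, hz⟩ := aux_vpol_spec C hi
    have hz2 : u i = z := by rw [hu]; simp only; rw [hz, aux_zOf_coe]
    rw [hz2]
    exact ⟨hz, hz0⟩
  have hptVal_top : ∀ i, A i = 0 → C.ptVal φ P h e i = ⊤ := by
    intro i hi
    rw [PadicCtx.ptVal, PadicCtx.ptValF, show C.phiCoeff φ P i = A i from rfl, hi,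
      aux_vpol_zero, aux_nsmul_top he.ne', top_add]
  have hptVal_coe : ∀ i, A i ≠ 0 →
      C.ptVal φ P h e i =
        ((((e : ℚ) * (u i : ℚ) + (h : ℚ) * (i : ℚ)) : ℚ) : WithTop ℚ) := by
    intro i hi
    rw [PadicCtx.ptVal, PadicCtx.ptValF, show C.phiCoeff φ P i = A i from rfl,
      (huval i hi).1, aux_nsmul_coe,
      show (((h * i : ℕ) : WithTop ℚ)) = ((((h : ℚ) * (i : ℚ)) : ℚ) : WithTop ℚ) by
        exact_mod_cast rfl,
      ← WithTop.coe_add]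
  have hWdef : W = (Finset.range (n + 1)).inf (fun i => C.ptVal φ P h e i) := by
    rw [hW]; rfl
  have hAex : ∃ i ∈ Finset.range (n + 1), A i ≠ 0 := by
    by_contra hall
    push_neg at hall
    apply hP
    rw [hdev]
    exact Finset.sum_eq_zero fun i hi => by rw [hall i hi, zero_mul]
  have hWne : W ≠ ⊤ := by
    obtain ⟨i1, hi1mem, hi1⟩ := hAex
    have h1 : W ≤ C.ptVal φ P h e i1 := by
      rw [hWdef]; exact Finset.inf_le hi1mem
    rw [hptVal_coe i1 hi1] at h1
    exact ne_top_of_le_ne_top (WithTop.coe_ne_top) h1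
  have hcond_ne : ∀ i, C.ptVal φ P h e i = W → A i ≠ 0 := by
    intro i hi hAi
    exact hWne ((hptVal_top i hAi) ▸ hi : (⊤ : WithTop ℚ) = W).symm
  -- the set of abscissae on the supporting line
  have hSne : {i | C.ptVal φ P h e i = W}.Nonempty := by
    obtain ⟨i0, hi0mem, hi0⟩ := Finset.exists_mem_eq_inf (Finset.range (n + 1))
      ⟨0, Finset.mem_range.mpr (Nat.succ_pos n)⟩ (fun i => C.ptVal φ P h e i)
    exact ⟨i0, by rw [Set.mem_setOf_eq, ← hi0, hWdef]⟩
  have hSsub : ∀ i, C.ptVal φ P h e i = W → i ≤ n := by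
    intro i hi
    by_contra hgt
    push_neg at hgt
    have hAz : A i = 0 := by
      rw [hA]; exact aux_phiCoeff_zero C φ hφm hdegφ hgt
    exact hWne ((hptVal_top i hAz) ▸ hi : (⊤ : WithTop ℚ) = W).symm
  have hSbdd : BddAbove {i | C.ptVal φ P h e i = W} := ⟨n, fun i hi => hSsub i hi⟩
  have hs_mem : C.ptVal φ P h e s = W := by
    have : s = sInf {i | C.ptVal φ P h e i = W} := by rw [hs, hW]; rfl
    rw [this]
    exact Nat.sInf_mem hSne
  have hS'_mem : C.ptVal φ P h e S' = W := by
    have : S' = sSup {i | C.ptVal φ P h e i = W} := by rw [hS', hW]; rfl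
    rw [this]
    exact Nat.sSup_mem hSne hSbdd
  have hs_le : ∀ i, C.ptVal φ P h e i = W → s ≤ i := by
    intro i hi
    have : s = sInf {i | C.ptVal φ P h e i = W} := by rw [hs, hW]; rfl
    rw [this]
    exact Nat.sInf_le hi
  have hle_S' : ∀ i, C.ptVal φ P h e i = W → i ≤ S' := by
    intro i hi
    have : S' = sSup {i | C.ptVal φ P h e i = W} := by rw [hS', hW]; rfl
    rw [this]
    exact le_csSup hSbdd hi
  -- the integer linear relation on the supporting line
  have hline : ∀ i, C.ptVal φ P h e i = W →
      (e : ℤ) * u i + (h : ℤ) * i = (e : ℤ) * u s + (h : ℤ) * s := by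
    intro i hi
    have h1 : C.ptVal φ P h e i = C.ptVal φ P h e s := by rw [hi, hs_mem]
    rw [hptVal_coe i (hcond_ne i hi), hptVal_coe s (hcond_ne s hs_mem),
      WithTop.coe_eq_coe] at h1
    exact_mod_cast h1
  have hdvd_e : ∀ i, C.ptVal φ P h e i = W → e ∣ (i - s) := by
    intro i hi
    have hsi := hs_le i hi
    have h1 : (h : ℤ) * ((i - s : ℕ) : ℤ) = (e : ℤ) * (u s - u i) := by
      have h2 := hline i hi
      have h3 : ((i - s : ℕ) : ℤ) = (i : ℤ) - (s : ℤ) := by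
        rw [Int.ofNat_sub hsi]
      rw [h3]; linarith
    have h4 : (e : ℤ) ∣ ((h * (i - s) : ℕ) : ℤ) := by
      rw [Nat.cast_mul]; exact ⟨u s - u i, h1⟩
    have h5 : e ∣ h * (i - s) := by exact_mod_cast h4
    exact (Nat.Coprime.dvd_of_dvd_mul_left (Nat.Coprime.symm hcop) h5)
  have hu_form : ∀ i, C.ptVal φ P h e i = W →
      u i = u s - (h : ℤ) * (((i - s) / e : ℕ) : ℤ) := by
    intro i hi
    have hsi := hs_le i hi
    have hje : ((i - s) / e) * e = i - s := Nat.div_mul_cancel (hdvd_e i hi)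
    have h1 : (h : ℤ) * ((i - s : ℕ) : ℤ) = (e : ℤ) * (u s - u i) := by
      have h2 := hline i hi
      have h3 : ((i - s : ℕ) : ℤ) = (i : ℤ) - (s : ℤ) := by rw [Int.ofNat_sub hsi]
      rw [h3]; linarith
    have h2 : (e : ℤ) * ((h : ℤ) * (((i - s) / e : ℕ) : ℤ)) = (e : ℤ) * (u s - u i) := by
      rw [← h1, show ((i - s : ℕ) : ℤ) = (((i - s) / e : ℕ) : ℤ) * (e : ℤ) by
        exact_mod_cast (congrArg (fun k : ℕ => (k : ℤ)) hje.symm)]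
      ring
    have he'' : (e : ℤ) ≠ 0 := by exact_mod_cast he.ne'
    have h3 := mul_left_cancel₀ he'' h2
    linarith
  -- the value `H(P)`
  set Hqq : ℚ := (u s : ℚ) + (s : ℚ) * ((h : ℚ) / (e : ℚ)) with hHqq
  have hHq : C.Hq φ P h e = Hqq := by
    rw [PadicCtx.Hq, ← hW, show W = ((((e : ℚ) * (u s : ℚ) + (h : ℚ) * (s : ℚ)) : ℚ) : WithTop ℚ)
      from (hptVal_coe s (hcond_ne s hs_mem)) ▸ hs_mem.symm, aux_qOf_coe, hHqq]
    field_simp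
  -- off-line terms have value strictly bigger than `H(P)`
  have hToff : ∀ i ∈ Finset.range (n + 1), C.ptVal φ P h e i ≠ W →
      ((Hqq : ℚ) : WithTop ℚ) < C.w (T i) := by
    intro i himem hine
    by_cases hAi : A i = 0
    · have : T i = 0 := by rw [hT]; simp only; rw [hAi, aux_evOm_zero, zero_mul]
      rw [this, C.w_zero]
      exact WithTop.coe_lt_top _
    · have hWle : W ≤ C.ptVal φ P h e i := by rw [hWdef]; exact Finset.inf_le himem
      have hlt : W < C.ptVal φ P h e i := lt_of_le_of_ne hWle (Ne.symm hine)
      rw [hptVal_coe i hAi, show W = ((((e : ℚ) * (u s : ℚ) + (h : ℚ) * (s : ℚ)) : ℚ) : WithTop ℚ)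
        from (hptVal_coe s (hcond_ne s hs_mem)) ▸ hs_mem.symm, WithTop.coe_lt_coe] at hlt
      have hq : Hqq < (u i : ℚ) + (i : ℚ) * ((h : ℚ) / (e : ℚ)) := by
        rw [hHqq, ← mul_lt_mul_iff_right₀ he0]
        have h1 : (e : ℚ) * ((u s : ℚ) + (s : ℚ) * ((h : ℚ) / (e : ℚ)))
            = (e : ℚ) * (u s : ℚ) + (h : ℚ) * (s : ℚ) := by field_simp
        have h2 : (e : ℚ) * ((u i : ℚ) + (i : ℚ) * ((h : ℚ) / (e : ℚ)))
            = (e : ℚ) * (u i : ℚ) + (h : ℚ) * (i : ℚ) := by field_simp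
        rw [h1, h2]
        exact hlt
      calc ((Hqq : ℚ) : WithTop ℚ)
          < ((((u i : ℚ) + (i : ℚ) * ((h : ℚ) / (e : ℚ))) : ℚ) : WithTop ℚ) :=
            WithTop.coe_lt_coe.mpr hq
        _ = ((u i : ℚ) : WithTop ℚ) + ((((i : ℚ) * ((h : ℚ) / (e : ℚ))) : ℚ) : WithTop ℚ) := by
            rw [← WithTop.coe_add]
        _ ≤ C.w (C.evOm (A i) θ) + ((((i : ℚ) * ((h : ℚ) / (e : ℚ))) : ℚ) : WithTop ℚ) :=
            add_le_add_left
              (le_of_eq_of_le (huval i hAi).1.symm (aux_w_evOm_ge C (A i) hθ0)) _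
        _ = C.w (T i) := by
            simp only [hT]
            rw [C.w_mul, aux_w_pow C hwφ i]
  -- expansion of the residual value `Rom`
  have hRom : C.Rom φ P h e θ =
      ∑ j ∈ Finset.range ((S' - s) / e + 1),
        (if C.ptVal φ P h e (s + j * e) = W then
          C.evOm (A (s + j * e)) θ * Pi ^ (-(u (s + j * e))) else 0) *
        (X ^ (e : ℤ) * Pi ^ (-(h : ℤ))) ^ j := by
    rw [PadicCtx.Rom]
    rfl
  have hwG : C.w (X ^ (e : ℤ) * Pi ^ (-(h : ℤ))) = ((0 : ℚ) : WithTop ℚ) := by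
    rw [C.w_mul, aux_w_zpow C hX0 hwφ (e : ℤ), aux_w_zpow C hπ0 hwπ (-(h : ℤ)),
      ← WithTop.coe_add, WithTop.coe_eq_coe]
    push_cast
    field_simp
    ring
  have hwRom_nonneg : 0 ≤ C.w (C.Rom φ P h e θ) := by
    rw [hRom]
    apply aux_w_sum_le
    intro j hj
    by_cases hc : C.ptVal φ P h e (s + j * e) = W
    · rw [if_pos hc, C.w_mul, C.w_mul, aux_w_zpow C hπ0 hwπ (-(u (s + j * e))),
        aux_w_pow C hwG j, mul_zero, WithTop.coe_zero, add_zero]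
      have h1 : ((u (s + j * e) : ℚ) : WithTop ℚ) ≤ C.w (C.evOm (A (s + j * e)) θ) :=
        le_of_eq_of_le (huval _ (hcond_ne _ hc)).1.symm (aux_w_evOm_ge C _ hθ0)
      calc (0 : WithTop ℚ)
          = ((u (s + j * e) : ℚ) : WithTop ℚ) +
            ((((-(u (s + j * e)) : ℤ) : ℚ) * 1 : ℚ) : WithTop ℚ) := by
            rw [← WithTop.coe_add]
            exact_mod_cast (by push_cast; ring : (0 : ℚ) =
              (u (s + j * e) : ℚ) + ((-(u (s + j * e)) : ℤ) : ℚ) * 1)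
        _ ≤ _ := add_le_add_left h1 _
    · rw [if_neg hc, zero_mul, C.w_zero]
      exact le_top
  -- the on-line part of the sum equals `π^{u_s} φ(θ)^s · Rom`
  have hOn : Pi ^ (u s) * X ^ s * C.Rom φ P h e θ =
      ∑ i ∈ Finset.range (n + 1), if C.ptVal φ P h e i = W then T i else 0 := by
    rw [hRom, Finset.mul_sum]
    have hterm : ∀ j,
        Pi ^ (u s) * X ^ s *
          ((if C.ptVal φ P h e (s + j * e) = W then
            C.evOm (A (s + j * e)) θ * Pi ^ (-(u (s + j * e))) else 0) *
            (X ^ (e : ℤ) * Pi ^ (-(h : ℤ))) ^ j) =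
        if C.ptVal φ P h e (s + j * e) = W then
          Pi ^ (u s) * X ^ s *
            (C.evOm (A (s + j * e)) θ * Pi ^ (-(u (s + j * e))) *
              (X ^ (e : ℤ) * Pi ^ (-(h : ℤ))) ^ j) else 0 := by
      intro j
      split_ifs with hc
      · ring
      · simp
    rw [Finset.sum_congr rfl (fun j _ => hterm j), ← Finset.sum_filter, ← Finset.sum_filter]
    refine Finset.sum_nbij' (fun j => s + j * e) (fun i => (i - s) / e) ?_ ?_ ?_ ?_ ?_
    · intro j hj
      have hc := (Finset.mem_filter.mp hj).2
      exact Finset.mem_filter.mpr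
        ⟨Finset.mem_range.mpr (Nat.lt_succ_of_le (hSsub _ hc)), hc⟩
    · intro i hi
      have hc := (Finset.mem_filter.mp hi).2
      have hrw : s + ((i - s) / e) * e = i := by
        rw [Nat.div_mul_cancel (hdvd_e i hc), Nat.add_sub_cancel' (hs_le i hc)]
      refine Finset.mem_filter.mpr ⟨Finset.mem_range.mpr (Nat.lt_succ_of_le ?_), ?_⟩
      · exact Nat.div_le_div_right (Nat.sub_le_sub_right (hle_S' i hc) s)
      · rw [hrw]; exact hc
    · intro j hj
      show (s + j * e - s) / e = j
      rw [Nat.add_sub_cancel_left, Nat.mul_div_cancel _ he]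
    · intro i hi
      have hc := (Finset.mem_filter.mp hi).2
      show s + ((i - s) / e) * e = i
      rw [Nat.div_mul_cancel (hdvd_e i hc), Nat.add_sub_cancel' (hs_le i hc)]
    · intro j hj
      have hc := (Finset.mem_filter.mp hj).2
      have hjval : ((s + j * e - s) / e : ℕ) = j := by
        rw [Nat.add_sub_cancel_left, Nat.mul_div_cancel _ he]
      have huf : u (s + j * e) = u s - (h : ℤ) * (j : ℤ) := by
        have h1 := hu_form (s + j * e) hc
        rwa [hjval] at h1
      have hGj : (X ^ (e : ℤ) * Pi ^ (-(h : ℤ))) ^ j =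
          X ^ ((e : ℤ) * (j : ℤ)) * Pi ^ (-((h : ℤ) * (j : ℤ))) := by
        rw [mul_pow, ← zpow_natCast (X ^ (e : ℤ)) j, ← zpow_natCast (Pi ^ (-(h : ℤ))) j,
          ← zpow_mul, ← zpow_mul, neg_mul]
      rw [hGj, huf]
      simp only [hT]
      calc Pi ^ (u s) * X ^ s *
            (C.evOm (A (s + j * e)) θ * Pi ^ (-(u s - (h : ℤ) * (j : ℤ))) *
              (X ^ ((e : ℤ) * (j : ℤ)) * Pi ^ (-((h : ℤ) * (j : ℤ)))))
          = C.evOm (A (s + j * e)) θ *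
              (Pi ^ (u s) * Pi ^ (-(u s - (h : ℤ) * (j : ℤ))) * Pi ^ (-((h : ℤ) * (j : ℤ)))) *
              (X ^ ((s : ℤ)) * X ^ ((e : ℤ) * (j : ℤ))) := by
            rw [← zpow_natCast X s]; ring
        _ = C.evOm (A (s + j * e)) θ *
              Pi ^ ((u s) + (-(u s - (h : ℤ) * (j : ℤ))) + (-((h : ℤ) * (j : ℤ)))) *
              X ^ ((s : ℤ) + (e : ℤ) * (j : ℤ)) := by
            rw [← zpow_add₀ hπ0, ← zpow_add₀ hπ0, ← zpow_add₀ hX0]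
        _ = C.evOm (A (s + j * e)) θ * X ^ (((s + j * e : ℕ) : ℤ)) := by
            rw [show (u s) + (-(u s - (h : ℤ) * (j : ℤ))) + (-((h : ℤ) * (j : ℤ))) = 0 by ring,
              zpow_zero, mul_one]
            congr 1
            push_cast
            ring
        _ = C.evOm (A (s + j * e)) θ * X ^ (s + j * e) := by rw [zpow_natCast]
  -- final assembly
  have hsum_split : C.evOm P θ =
      (Pi ^ (u s) * X ^ s * C.Rom φ P h e θ) +
      (∑ i ∈ Finset.range (n + 1), if C.ptVal φ P h e i = W then 0 else T i) := by
    rw [hPθ, hOn, ← Finset.sum_add_distrib]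
    refine Finset.sum_congr rfl fun i _ => ?_
    split_ifs <;> simp
  have hoffb : ((Hqq : ℚ) : WithTop ℚ) <
      C.w (∑ i ∈ Finset.range (n + 1), if C.ptVal φ P h e i = W then 0 else T i) := by
    apply aux_w_sum_lt
    intro i hi
    split_ifs with hc
    · rw [C.w_zero]; exact WithTop.coe_lt_top _
    · exact hToff i hi hc
  have hwB : C.w (Pi ^ (u s) * X ^ s * C.Rom φ P h e θ) =
      ((Hqq : ℚ) : WithTop ℚ) + C.w (C.Rom φ P h e θ) := by
    rw [C.w_mul, C.w_mul, aux_w_zpow C hπ0 hwπ (u s), aux_w_pow C hwφ s, ← WithTop.coe_add]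
    congr 1
    rw [WithTop.coe_eq_coe, hHqq]
    push_cast
    ring
  have hwB' : ((Hqq : ℚ) : WithTop ℚ) ≤ C.w (Pi ^ (u s) * X ^ s * C.Rom φ P h e θ) := by
    rw [hwB]
    exact le_add_of_nonneg_right hwRom_nonneg
  refine ⟨?_, ?_, ?_⟩
  · rw [hHq, hsum_split]
    exact le_trans (le_min hwB' hoffb.le) (C.w_add _ _)
  · intro heq
    by_contra hne
    have hpos : 0 < C.w (C.Rom φ P h e θ) := lt_of_le_of_ne hwRom_nonneg (Ne.symm hne)
    have h1 : ((Hqq : ℚ) : WithTop ℚ) < C.w (Pi ^ (u s) * X ^ s * C.Rom φ P h e θ) := by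
      rw [hwB]
      exact aux_lt_add_of_pos Hqq _ hpos
    have h2 : ((Hqq : ℚ) : WithTop ℚ) < C.w (C.evOm P θ) := by
      rw [hsum_split]
      exact lt_of_lt_of_le (lt_min h1 hoffb) (C.w_add _ _)
    rw [heq, hHq] at h2
    exact lt_irrefl _ h2
  · intro h0
    rw [hHq, hsum_split]
    have hB0 : C.w (Pi ^ (u s) * X ^ s * C.Rom φ P h e θ) = ((Hqq : ℚ) : WithTop ℚ) := by
      rw [hwB, h0, add_zero]
    have hkey : C.w ((Pi ^ (u s) * X ^ s * C.Rom φ P h e θ) +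
        (∑ i ∈ Finset.range (n + 1), if C.ptVal φ P h e i = W then 0 else T i)) =
        C.w (Pi ^ (u s) * X ^ s * C.Rom φ P h e θ) := by
      rw [add_comm]
      exact aux_w_add_eq_right C _ _ (by rw [hB0]; exact hoffb)
    rw [hkey, hB0]
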